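/- There exists a constant C > 0 depending only on d such that for every N ∈ ℕ, every M > 0 and every ε > 0, there exists a finite set G ⊆ NN(N,M) with log card(G) ≤ C N log(1 + M/ε) such that for every f ∈ NN(N,M) there is g ∈ G with sup_{x ∈ B^d} |f(x) - g(x)| ≤ ε. -/

import Mathlib

open MeasureTheory Real

noncomputable section

/-- Euclidean space ℝ^d. -/
abbrev E (d : ℕ) := EuclideanSpace ℝ (Fin d)

/-- The ReLU function σ(t) = max{t, 0}. -/
def relu (t : ℝ) : ℝ := max t 0

/-- The quantity (xᵀ,1)v : the inner product of (x,1) ∈ ℝ^{d+1} with v ∈ ℝ^{d+1}. -/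
def aff {d : ℕ} (x : E d) (v : E (d + 1)) : ℝ :=
  (∑ i : Fin d, x i * v i.castSucc) + v (Fin.last d)

/-- Parameters θ = (a_1, w_1, …, a_N, w_N) of a shallow ReLU network of width N. -/
abbrev Params (d N : ℕ) := (Fin N → ℝ) × (Fin N → E (d + 1))

/-- The network function f_θ(x) = Σ_i a_i σ((xᵀ,1) w_i). -/
def networkFn {d N : ℕ} (θ : Params d N) (x : E d) : ℝ :=
  ∑ i, θ.1 i * relu (aff x (θ.2 i))

/-- The path norm κ(θ) = Σ_i |a_i| ‖w_i‖₂. -/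
def pathNorm {d N : ℕ} (θ : Params d N) : ℝ :=
  ∑ i, |θ.1 i| * ‖θ.2 i‖

/-- The squared Euclidean norm ‖θ‖₂² of the parameter vector. -/
def paramNormSq {d N : ℕ} (θ : Params d N) : ℝ :=
  (∑ i, (θ.1 i) ^ 2) + ∑ i, ‖θ.2 i‖ ^ 2

/-- NN(N): functions on the unit ball B^d realized by a width-N shallow ReLU network. -/
def NNclass (d N : ℕ) : Set (E d → ℝ) :=
  {f | ∃ θ : Params d N, ∀ x : E d, ‖x‖ ≤ 1 → f x = networkFn θ x}

/-- NN(N, M): functions realized by a width-N network with path norm κ(θ) ≤ M. -/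
def NNclassM (d N : ℕ) (M : ℝ) : Set (E d → ℝ) :=
  {f | ∃ θ : Params d N, pathNorm θ ≤ M ∧ ∀ x : E d, ‖x‖ ≤ 1 → f x = networkFn θ x}

/-- κ(f) = inf{ Σ_j |c_j| : f(x) = Σ_j c_j σ((xᵀ,1)v_j) on B^d, v_j ∈ S^d }. -/
def kappaF {d : ℕ} (f : E d → ℝ) : ℝ :=
  sInf {s | ∃ (m : ℕ) (c : Fin m → ℝ) (v : Fin m → E (d + 1)),
    (∀ j, ‖v j‖ = 1) ∧ (∀ x : E d, ‖x‖ ≤ 1 → f x = ∑ j, c j * relu (aff x (v j))) ∧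
    s = ∑ j, |c j|}

/-- S_- = {v ∈ S^d : v_{d+1} ≤ -√2/2}. -/
def Sminus (d : ℕ) : Set (E (d + 1)) :=
  {v | ‖v‖ = 1 ∧ v (Fin.last d) ≤ -(Real.sqrt 2 / 2)}

/-- S_+ = -S_-. -/
def Splus (d : ℕ) : Set (E (d + 1)) := {v | -v ∈ Sminus d}

/-- S_0 = S^d \ (S_- ∪ S_+). -/
def Szero (d : ℕ) : Set (E (d + 1)) := {v | ‖v‖ = 1} \ (Sminus d ∪ Splus d)

/-- The variation class F_σ(M): functions f(x) = ∫_{S^d} σ((xᵀ,1)v) dμ(v) for a signed Radon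
measure μ on S^d with ‖μ‖ ≤ M (represented by its Jordan decomposition μ = μp - μn). -/
def Fsigma (d : ℕ) (M : ℝ) : Set (E d → ℝ) :=
  {f | ∃ μp μn : Measure (E (d + 1)), IsFiniteMeasure μp ∧ IsFiniteMeasure μn ∧
    μp {v | ‖v‖ = 1}ᶜ = 0 ∧ μn {v | ‖v‖ = 1}ᶜ = 0 ∧
    (μp Set.univ).toReal + (μn Set.univ).toReal ≤ M ∧
    ∀ x : E d, ‖x‖ ≤ 1 →
      f x = (∫ v, relu (aff x v) ∂μp) - ∫ v, relu (aff x v) ∂μn}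

/-- Empirical L²(μ_n) norm: ‖f‖_{L²(μ_n)} = ((1/n) Σ_i f(X_i)²)^{1/2}. -/
def empNorm {d n : ℕ} (X : Fin n → E d) (f : E d → ℝ) : ℝ :=
  Real.sqrt ((∑ i, (f (X i)) ^ 2) / n)

/-- Local complexity G_n(F; δ, ξ) = E[ sup { |(1/n) Σ_i ξ_i f(X_i)| : f ∈ F, ‖f‖_{L²(μ_n)} ≤ δ} ]. -/
def localComplexity {d n : ℕ} {Ω : Type*} [MeasurableSpace Ω] (P : Measure Ω)
    (F : Set (E d → ℝ)) (X : Fin n → E d) (δ : ℝ) (ξ : Fin n → Ω → ℝ) : ℝ :=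
  ∫ ω, sSup {r | ∃ f ∈ F, empNorm X f ≤ δ ∧ r = |(∑ i, ξ i ω * f (X i)) / n|} ∂P

/-- star(F) = {a f : f ∈ F, a ∈ [0,1]}. -/
def starHull {d : ℕ} (F : Set (E d → ℝ)) : Set (E d → ℝ) :=
  {g | ∃ f ∈ F, ∃ a : ℝ, 0 ≤ a ∧ a ≤ 1 ∧ g = fun x => a * f x}

/-- ∂F = {f₁ - f₂ : f₁, f₂ ∈ F}. -/
def diffClass {d : ℕ} (F : Set (E d → ℝ)) : Set (E d → ℝ) :=
  {g | ∃ f₁ ∈ F, ∃ f₂ ∈ F, g = f₁ - f₂}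

/-- Truncation operator T_b. -/
def truncate {d : ℕ} (b : ℝ) (f : E d → ℝ) : E d → ℝ := fun x => max (-b) (min b (f x))

/-- The Hölder ball H^α on B^d. -/
def HolderBall (d : ℕ) (α : ℝ) : Set (E d → ℝ) :=
  {h | ∃ (r : ℕ) (β : ℝ) (g : E d → ℝ), α = r + β ∧ 0 < β ∧ β ≤ 1 ∧
    (∀ x : E d, ‖x‖ ≤ 1 → g x = h x) ∧ ContDiff ℝ r g ∧
    (∀ k : ℕ, k ≤ r → ∀ x, ‖iteratedFDeriv ℝ k g x‖ ≤ 1) ∧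
    (∀ x y : E d, ‖iteratedFDeriv ℝ r g x - iteratedFDeriv ℝ r g y‖ ≤ ‖x - y‖ ^ β)}
/- ===== Auxiliary lemmas for statement15 ===== -/

lemma relu_abs_sub' (a b : ℝ) : |relu a - relu b| ≤ |a - b| := abs_max_sub_max_le_abs a b 0
lemma relu_le_abs' (a : ℝ) : relu a ≤ |a| := max_le (le_abs_self a) (abs_nonneg a)
lemma relu_nonneg' (a : ℝ) : 0 ≤ relu a := le_max_right a 0
lemma abs_relu_le' (a : ℝ) : |relu a| ≤ |a| := by
  rw [abs_of_nonneg (relu_nonneg' a)]; exact relu_le_abs' a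
lemma relu_const_mul' (s t : ℝ) (hs : 0 ≤ s) : relu (s * t) = s * relu t := by
  unfold relu
  rw [mul_max_of_nonneg _ _ hs, mul_zero]

lemma coord_abs_le_norm' {m : ℕ} (v : E m) (j : Fin m) : |v j| ≤ ‖v‖ := by
  rw [EuclideanSpace.norm_eq]
  have h : |v j| = Real.sqrt (|v j|^2) := by rw [Real.sqrt_sq_eq_abs, abs_abs]
  rw [h]
  apply Real.sqrt_le_sqrt
  exact Finset.single_le_sum (f := fun i => |v i|^2) (fun i _ => by positivity) (Finset.mem_univ j)

lemma norm_le_of_coord' {m : ℕ} (v w : E m) (h : ∀ j, |v j| ≤ |w j|) : ‖v‖ ≤ ‖w‖ := by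
  rw [EuclideanSpace.norm_eq, EuclideanSpace.norm_eq]
  apply Real.sqrt_le_sqrt
  apply Finset.sum_le_sum
  intro i _
  exact pow_le_pow_left₀ (abs_nonneg _) (h i) 2

lemma norm_le_of_coord_le' {m : ℕ} (v : E m) (c : ℝ) (hc : 0 ≤ c) (h : ∀ j, |v j| ≤ c) :
    ‖v‖ ≤ m * c := by
  rw [EuclideanSpace.norm_eq]
  have h1 : ∑ i : Fin m, |v i|^2 ≤ ∑ _i : Fin m, c^2 :=
    Finset.sum_le_sum fun i _ => pow_le_pow_left₀ (abs_nonneg _) (h i) 2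
  simp only [Finset.sum_const, Finset.card_univ, Fintype.card_fin, nsmul_eq_mul] at h1
  have hm : (m:ℝ) ≤ (m:ℝ)^2 := by
    rcases Nat.eq_zero_or_pos m with h0 | h0
    · simp [h0]
    · have h1 : (1:ℝ) ≤ (m:ℝ) := by exact_mod_cast h0
      nlinarith
  calc Real.sqrt (∑ i : Fin m, |v i|^2) ≤ Real.sqrt (m * c^2) := Real.sqrt_le_sqrt h1
    _ ≤ Real.sqrt ((m*c)^2) := by
        apply Real.sqrt_le_sqrt; rw [mul_pow]; nlinarith [sq_nonneg c]
    _ = m * c := Real.sqrt_sq (by positivity)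

lemma aff_sub' {d : ℕ} (x : E d) (v w : E (d+1)) : aff x (v - w) = aff x v - aff x w := by
  unfold aff
  simp only [PiLp.sub_apply, mul_sub, Finset.sum_sub_distrib]
  ring

lemma aff_smul' {d : ℕ} (x : E d) (s : ℝ) (v : E (d+1)) : aff x (s • v) = s * aff x v := by
  unfold aff
  simp only [PiLp.smul_apply, smul_eq_mul]
  rw [Finset.sum_congr rfl (fun i _ => by ring :
    ∀ i ∈ Finset.univ, x i * (s * v i.castSucc) = s * (x i * v i.castSucc)), ← Finset.mul_sum]
  ring

lemma aff_zero' {d : ℕ} (x : E d) : aff x (0 : E (d+1)) = 0 := by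
  unfold aff; simp

lemma abs_aff_le' {d : ℕ} (x : E d) (hx : ‖x‖ ≤ 1) (v : E (d+1)) : |aff x v| ≤ 2 * ‖v‖ := by
  unfold aff
  have h1 : |∑ i : Fin d, x i * v i.castSucc| ≤ ‖v‖ := by
    set v' : E d := WithLp.toLp 2 (fun i : Fin d => v i.castSucc) with hv'
    have hs : ∑ i : Fin d, x i * v i.castSucc = (inner ℝ x v' : ℝ) := by
      rw [PiLp.inner_apply]
      apply Finset.sum_congr rfl
      intro i _
      simp [hv', RCLike.inner_apply, mul_comm]
    rw [hs]
    calc |(inner ℝ x v' : ℝ)| ≤ ‖x‖ * ‖v'‖ := abs_real_inner_le_norm x v'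
      _ ≤ 1 * ‖v‖ := by
          apply mul_le_mul hx ?_ (norm_nonneg _) zero_le_one
          rw [EuclideanSpace.norm_eq, EuclideanSpace.norm_eq]
          apply Real.sqrt_le_sqrt
          rw [Fin.sum_univ_castSucc (f := fun j => ‖v j‖^2)]
          have hpos : (0:ℝ) ≤ ‖v (Fin.last d)‖^2 := by positivity
          have hh : ∑ i : Fin d, ‖v' i‖^2 = ∑ i : Fin d, ‖v i.castSucc‖^2 := rfl
          rw [hh]
          linarith
      _ = ‖v‖ := one_mul _
  have h2 : |v (Fin.last d)| ≤ ‖v‖ := coord_abs_le_norm' v _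
  calc |(∑ i : Fin d, x i * v i.castSucc) + v (Fin.last d)|
      ≤ |∑ i : Fin d, x i * v i.castSucc| + |v (Fin.last d)| := abs_add_le _ _
    _ ≤ ‖v‖ + ‖v‖ := add_le_add h1 h2
    _ = 2 * ‖v‖ := by ring

def itz (t : ℝ) : ℤ := if 0 ≤ t then ⌊t⌋ else ⌈t⌉

lemma abs_itz_le (t : ℝ) : |(itz t : ℝ)| ≤ |t| := by
  unfold itz
  split_ifs with h
  · rw [abs_of_nonneg (by exact_mod_cast Int.floor_nonneg.mpr h), abs_of_nonneg h]
    exact Int.floor_le t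
  · push_neg at h
    have hc : (⌈t⌉ : ℤ) ≤ 0 := Int.ceil_le.mpr (by exact_mod_cast h.le)
    rw [abs_of_nonpos (by exact_mod_cast hc), abs_of_neg h]
    simp only [neg_le_neg_iff]
    exact Int.le_ceil t

lemma abs_sub_mul_itz_le (δ t : ℝ) (hδ : 0 < δ) : |t - δ * itz (t / δ)| ≤ δ := by
  have ht : δ * (t/δ) = t := by field_simp
  unfold itz
  split_ifs with h
  · have h1 : (⌊t/δ⌋ : ℝ) ≤ t/δ := Int.floor_le _
    have h2 : t/δ - 1 < ⌊t/δ⌋ := Int.sub_one_lt_floor _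
    rw [abs_le]
    refine ⟨by nlinarith, by nlinarith⟩
  · have h1 : (t/δ : ℝ) ≤ ⌈t/δ⌉ := Int.le_ceil _
    have h2 : (⌈t/δ⌉ : ℝ) < t/δ + 1 := Int.ceil_lt_add_one _
    rw [abs_le]
    refine ⟨by nlinarith, by nlinarith⟩

lemma multiset_card_finsum {ι α : Type*} (s : Finset ι) (f : ι → Multiset α) :
    Multiset.card (∑ i ∈ s, f i) = ∑ i ∈ s, Multiset.card (f i) := by
  classical
  induction s using Finset.induction with
  | empty => simp
  | insert a s h ih => rw [Finset.sum_insert h, Finset.sum_insert h, Multiset.card_add, ih]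

lemma multiset_count_finsum {ι α : Type*} [DecidableEq α] (s : Finset ι) (f : ι → Multiset α)
    (a : α) : Multiset.count a (∑ i ∈ s, f i) = ∑ i ∈ s, Multiset.count a (f i) := by
  classical
  induction s using Finset.induction with
  | empty => simp
  | insert a s h ih => rw [Finset.sum_insert h, Finset.sum_insert h, Multiset.count_add, ih]

def symOf (N K : ℕ) (n : Fin N → ℕ) : Multiset (Fin (N+1)) :=
  ∑ i : Fin (N+1), Multiset.replicate ((Fin.snoc n (K - ∑ j, n j) : Fin (N+1) → ℕ) i) i

lemma count_symOf (N K : ℕ) (n : Fin N → ℕ) (j : Fin (N+1)) :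
    Multiset.count j (symOf N K n) = (Fin.snoc n (K - ∑ j, n j) : Fin (N+1) → ℕ) j := by
  unfold symOf
  rw [multiset_count_finsum]
  simp only [Multiset.count_replicate]
  rw [Finset.sum_ite_eq' Finset.univ j]
  simp

lemma card_symOf (N K : ℕ) (n : Fin N → ℕ) (h : ∑ j, n j ≤ K) :
    Multiset.card (symOf N K n) = K := by
  unfold symOf
  rw [multiset_card_finsum]
  simp only [Multiset.card_replicate]
  rw [Fin.sum_univ_castSucc]
  simp only [Fin.snoc_castSucc, Fin.snoc_last]
  omega

lemma card_natvec_le (N K : ℕ) :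
    ((Fintype.piFinset fun _ : Fin N => Finset.range (K+1)).filter
      (fun n : Fin N → ℕ => ∑ i, n i ≤ K)).card ≤ (N + K).choose K := by
  classical
  have hcard : Fintype.card (Sym (Fin (N+1)) K) = (N + K).choose K := by
    rw [Sym.card_sym_eq_choose, Fintype.card_fin]
    congr 1
    omega
  rw [← hcard, ← Finset.card_univ (α := Sym (Fin (N+1)) K)]
  apply Finset.card_le_card_of_injOn
    (fun n => if h : ∑ i, n i ≤ K then ⟨symOf N K n, card_symOf N K n h⟩ else Sym.replicate K 0)
  · intro n _; exact Finset.mem_univ _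
  · intro n hn m hm hEq
    simp only [Finset.mem_coe, Finset.mem_filter] at hn hm
    dsimp only at hEq
    have hms : symOf N K n = symOf N K m := by
      have h2 := congrArg (fun s : Sym (Fin (N+1)) K => (s : Multiset (Fin (N+1)))) hEq
      simpa [hn.2, hm.2] using h2
    funext i
    have hcnt := congrArg (Multiset.count i.castSucc) hms
    rw [count_symOf, count_symOf] at hcnt
    simpa [Fin.snoc_castSucc] using hcnt

def signEnc (N : ℕ) (z : Fin N → ℤ) : (Fin N → Bool) × (Fin N → ℕ) :=
  (fun i => decide (z i < 0), fun i => (z i).natAbs)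

lemma card_intvec_le (N K : ℕ) :
    ((Fintype.piFinset fun _ : Fin N => Finset.Icc (-(K:ℤ)) (K:ℤ)).filter
      (fun z : Fin N → ℤ => ∑ i, |z i| ≤ (K:ℤ))).card ≤ 2^N * (N + K).choose K := by
  classical
  have htarget : ((Finset.univ : Finset (Fin N → Bool)) ×ˢ
      ((Fintype.piFinset fun _ : Fin N => Finset.range (K+1)).filter
        (fun n : Fin N → ℕ => ∑ i, n i ≤ K))).card ≤ 2^N * (N + K).choose K := by
    rw [Finset.card_product]
    apply Nat.mul_le_mul
    · rw [Finset.card_univ]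
      simp [Fintype.card_fun]
    · exact card_natvec_le N K
  refine le_trans ?_ htarget
  apply Finset.card_le_card_of_injOn (signEnc N)
  · intro z hz
    simp only [Finset.mem_coe, Finset.mem_filter, Fintype.mem_piFinset] at hz
    obtain ⟨hmem, hsum⟩ := hz
    unfold signEnc
    rw [Finset.mem_coe, Finset.mem_product]
    constructor
    · exact Finset.mem_univ _
    · rw [Finset.mem_filter, Fintype.mem_piFinset]
      constructor
      · intro i
        rw [Finset.mem_range]
        have hI := hmem i
        rw [Finset.mem_Icc] at hI
        show (z i).natAbs < K + 1
        clear hsum hmem htarget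
        omega
      · show (∑ i, (z i).natAbs) ≤ K
        have hsum' : (∑ i, (((z i).natAbs : ℕ) :ℤ)) ≤ (K:ℤ) := by
          simp only [Int.natCast_natAbs]
          exact hsum
        exact_mod_cast hsum'
  · intro z hz w hw hEq
    unfold signEnc at hEq
    simp only [Prod.mk.injEq] at hEq
    obtain ⟨hb, hn⟩ := hEq
    funext i
    have h1 : decide (z i < 0) = decide (w i < 0) := by simpa using congrFun hb i
    have h2 : (z i).natAbs = (w i).natAbs := by simpa using congrFun hn i
    have h3 : (z i < 0) ↔ (w i < 0) := by
      simpa using congrArg (fun b => b = true) h1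
    clear hz hw hb hn h1 htarget
    omega

lemma pow_self_le_exp_mul_factorial (n : ℕ) : (n:ℝ)^n ≤ Real.exp n * n.factorial := by
  induction n with
  | zero => simp
  | succ n ih =>
    have key : ((n:ℝ)+1)^n ≤ Real.exp 1 * (n:ℝ)^n := by
      rcases Nat.eq_zero_or_pos n with h0 | h0
      · simp [h0]
      · have hn : (0:ℝ) < n := by exact_mod_cast h0
        have h1 : (1 + 1/(n:ℝ)) ≤ Real.exp (1/n) := by
          have := Real.add_one_le_exp (1/(n:ℝ))
          linarith
        have h2 : (1 + 1/(n:ℝ))^n ≤ Real.exp (1/n) ^ n :=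
          pow_le_pow_left₀ (by positivity) h1 n
        have h3 : Real.exp (1/(n:ℝ)) ^ n = Real.exp 1 := by
          rw [← Real.exp_nat_mul]
          congr 1
          field_simp
        have hsplit : ((n:ℝ)+1)^n = (n:ℝ)^n * (1 + 1/(n:ℝ))^n := by
          rw [← mul_pow]
          congr 1
          field_simp
        rw [h3] at h2
        rw [hsplit]
        calc (n:ℝ)^n * (1 + 1/(n:ℝ))^n ≤ (n:ℝ)^n * Real.exp 1 :=
              mul_le_mul_of_nonneg_left h2 (by positivity)
          _ = Real.exp 1 * (n:ℝ)^n := by ring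
    calc ((n+1:ℕ):ℝ)^(n+1) = ((n:ℝ)+1) * ((n:ℝ)+1)^n := by push_cast; ring
      _ ≤ ((n:ℝ)+1) * (Real.exp 1 * (n:ℝ)^n) :=
          mul_le_mul_of_nonneg_left key (by positivity)
      _ ≤ ((n:ℝ)+1) * (Real.exp 1 * (Real.exp n * n.factorial)) := by
          apply mul_le_mul_of_nonneg_left _ (by positivity)
          exact mul_le_mul_of_nonneg_left ih (by positivity)
      _ = Real.exp ((n:ℝ)+1) * (((n:ℝ)+1) * n.factorial) := by
          rw [Real.exp_add]; ring
      _ = Real.exp ((n+1:ℕ):ℝ) * ((n+1).factorial) := by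
          push_cast [Nat.factorial_succ]; ring

lemma choose_real_le (N K : ℕ) (hN : 1 ≤ N) :
    (((N+K).choose K : ℝ)) ≤ (Real.exp 1 * (1 + (K:ℝ)/N))^N := by
  have hs : (N+K).choose K = (N+K).choose N := by
    rw [Nat.add_comm N K, Nat.choose_symm_add]
  have h1 : (N+K).choose N * N.factorial ≤ (N+K)^N := by
    have hdf := Nat.descFactorial_le_pow (N+K) N
    rwa [Nat.descFactorial_eq_factorial_mul_choose, Nat.mul_comm] at hdf
  have hNr : (0:ℝ) < N := by exact_mod_cast hN
  have hfr : (0:ℝ) < N.factorial := by exact_mod_cast N.factorial_pos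
  have h2 : ((N+K).choose N : ℝ) ≤ ((N:ℝ)+K)^N / N.factorial := by
    rw [le_div_iff₀ hfr]
    have hcast : (((N+K).choose N * N.factorial : ℕ) : ℝ) ≤ (((N+K)^N : ℕ) : ℝ) := by
      exact_mod_cast h1
    push_cast at hcast
    linarith
  have h3 : ((N:ℝ)+K)^N / N.factorial ≤ ((N:ℝ)+K)^N * Real.exp N / (N:ℝ)^N := by
    rw [div_le_div_iff₀ hfr (by positivity)]
    have hp := pow_self_le_exp_mul_factorial N
    nlinarith [pow_nonneg (by positivity : (0:ℝ) ≤ (N:ℝ)+K) N, Real.exp_pos (N:ℝ),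
      pow_pos hNr N]
  have h4 : (Real.exp 1 * (1 + (K:ℝ)/N))^N = ((N:ℝ)+K)^N * Real.exp N / (N:ℝ)^N := by
    have he : 1 + (K:ℝ)/N = ((N:ℝ)+K)/N := by field_simp
    rw [he, mul_pow, div_pow, Real.exp_one_pow]
    ring
  rw [hs, h4]
  exact le_trans h2 h3

def vecOf (m : ℕ) (δ : ℝ) (y : Fin m → ℤ) : E m := WithLp.toLp 2 (fun j => δ * (y j : ℝ))

lemma vecOf_apply (m : ℕ) (δ : ℝ) (y : Fin m → ℤ) (j : Fin m) :
    vecOf m δ y j = δ * (y j : ℝ) := rfl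

lemma networkFn_abs_le {d N : ℕ} (θ : Params d N) (x : E d) (hx : ‖x‖ ≤ 1) :
    |networkFn θ x| ≤ 2 * pathNorm θ := by
  unfold networkFn pathNorm
  calc |∑ i, θ.1 i * relu (aff x (θ.2 i))| ≤ ∑ i, |θ.1 i * relu (aff x (θ.2 i))| :=
        Finset.abs_sum_le_sum_abs _ _
    _ ≤ ∑ i, |θ.1 i| * (2 * ‖θ.2 i‖) := by
        apply Finset.sum_le_sum
        intro i _
        rw [abs_mul]
        apply mul_le_mul_of_nonneg_left _ (abs_nonneg _)
        exact le_trans (abs_relu_le' _) (abs_aff_le' x hx _)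
    _ = 2 * ∑ i, |θ.1 i| * ‖θ.2 i‖ := by rw [Finset.mul_sum]; apply Finset.sum_congr rfl; intros; ring

lemma normalize_network {d N : ℕ} (θ : Params d N) :
    ∃ (c : Fin N → ℝ) (u : Fin N → E (d+1)), (∀ i, ‖u i‖ ≤ 1) ∧
      (∑ i, |c i|) = pathNorm θ ∧
      ∀ x : E d, networkFn θ x = ∑ i, c i * relu (aff x (u i)) := by
  refine ⟨fun i => θ.1 i * ‖θ.2 i‖, fun i => ‖θ.2 i‖⁻¹ • θ.2 i, ?_, ?_, ?_⟩
  · intro i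
    rcases eq_or_ne (θ.2 i) 0 with h | h
    · simp [h]
    · rw [norm_smul, norm_inv, norm_norm, inv_mul_cancel₀ (norm_ne_zero_iff.mpr h)]
  · unfold pathNorm
    apply Finset.sum_congr rfl
    intro i _
    rw [abs_mul, abs_of_nonneg (norm_nonneg _)]
  · intro x
    unfold networkFn
    apply Finset.sum_congr rfl
    intro i _
    rcases eq_or_ne (θ.2 i) 0 with h | h
    · simp [h, aff_zero']
      right
      unfold relu
      simp
    · rw [aff_smul', relu_const_mul' _ _ (inv_nonneg.mpr (norm_nonneg _))]
      have hn0 : ‖θ.2 i‖ ≠ 0 := norm_ne_zero_iff.mpr h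
      field_simp

lemma term_bound (ci c' r r' δ η : ℝ) (hcc' : |ci - c'| ≤ δ) (hc'le : |c'| ≤ |ci|)
    (hr : |r| ≤ 2) (hrr' : |r - r'| ≤ η) (hδ : 0 ≤ δ) (hη : 0 ≤ η) :
    |ci * r - c' * r'| ≤ 2*δ + |ci| * η := by
  have hsplit : ci * r - c' * r' = (ci - c') * r + c' * (r - r') := by ring
  calc |ci * r - c' * r'| = |(ci - c')*r + c'*(r-r')| := by rw [hsplit]
    _ ≤ |(ci - c')*r| + |c'*(r-r')| := abs_add_le _ _
    _ = |ci - c'| * |r| + |c'| * |r - r'| := by rw [abs_mul, abs_mul]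
    _ ≤ δ * 2 + |ci| * η :=
        add_le_add (mul_le_mul hcc' hr (abs_nonneg _) hδ)
          (mul_le_mul hc'le hrr' (abs_nonneg _) (abs_nonneg _))
    _ = 2*δ + |ci| * η := by ring

lemma aux_base_bound (t b x : ℝ) (ht0 : 0 < t) (hb32 : 3/2 ≤ b) (hbdef : b = 1 + t)
    (e0 : 0 ≤ x) (hfrac : x ≤ 4*t) : 2 * (Real.exp 1 * (1 + x)) ≤ b^10 := by
  have h2e : Real.exp 1 ≤ 3 := by
    have := Real.exp_one_lt_d9
    linarith
  have e1 : 2 * (Real.exp 1 * (1 + x)) ≤ 6*(1+4*t) := by nlinarith [Real.exp_pos 1]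
  have e2 : 6*(1+4*t) ≤ 24*b := by nlinarith
  have e3 : (24:ℝ) ≤ b^9 :=
    le_trans (by norm_num) (pow_le_pow_left₀ (by norm_num) hb32 9)
  have hb0 : (0:ℝ) < b := by linarith
  calc 2 * (Real.exp 1 * (1 + x)) ≤ 24*b := le_trans e1 e2
    _ ≤ b^9 * b := by nlinarith
    _ = b^10 := (pow_succ b 9).symm

lemma aux_ku_bound (d Ku : ℕ) (t b : ℝ) (ht0 : 0 < t) (hb32 : (3/2:ℝ) ≤ b) (hbdef : b = 1 + t)
    (hKule : (Ku:ℝ) ≤ 4*((d:ℝ)+1)*t + 1) : ((2*Ku+1 : ℕ):ℝ) ≤ b^(17*(d+2)) := by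
  have hb1 : (1:ℝ) ≤ b := by linarith
  have hb0 : (0:ℝ) < b := by linarith
  have hn2 : ((8*d+11:ℕ):ℝ) ≤ 2^(8*d+11) := by
    exact_mod_cast (Nat.lt_two_pow_self (n := 8*d+11)).le
  have h2b : (2:ℝ) ≤ b^2 := by nlinarith
  have h8d : ((8*d+11:ℕ):ℝ) ≤ b^(16*d+22) := by
    calc ((8*d+11:ℕ):ℝ) ≤ 2^(8*d+11) := hn2
      _ ≤ (b^2)^(8*d+11) := pow_le_pow_left₀ (by norm_num) h2b _
      _ = b^(16*d+22) := by rw [← pow_mul]; congr 1; ring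
  calc ((2*Ku+1:ℕ):ℝ) = 2*(Ku:ℝ)+1 := by push_cast; ring
    _ ≤ 2*(4*((d:ℝ)+1)*t+1)+1 := by nlinarith
    _ = 8*((d:ℝ)+1)*t + 3 := by ring
    _ ≤ ((8*d+11:ℕ):ℝ) * b := by
        push_cast
        rw [hbdef]
        nlinarith [Nat.cast_nonneg (α := ℝ) d]
    _ ≤ b^(16*d+22) * b := mul_le_mul_of_nonneg_right h8d hb0.le
    _ = b^(16*d+23) := (pow_succ b _).symm
    _ ≤ b^(17*(d+2)) := by
        gcongr
        omega

lemma aux_exponent (d N : ℕ) : 10*N + 17*(d+2)*((d+1)*N) ≤ 50*(d+2)^2*N := by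
  nlinarith [Nat.zero_le d, Nat.zero_le N, sq_nonneg (d+2)]

set_option maxHeartbeats 1000000 in
/-- covering numbers of NN(N, M) in the uniform norm on B^d. -/
theorem statement15 (d : ℕ) (hd : 1 ≤ d) :
    ∃ C : ℝ, 0 < C ∧
      ∀ (N : ℕ) (M ε : ℝ), 1 ≤ N → 0 < M → 0 < ε →
        ∃ G : Set (E d → ℝ), G ⊆ NNclassM d N M ∧ G.Finite ∧
          Real.log (Nat.card G) ≤ C * N * Real.log (1 + M / ε) ∧
          ∀ f ∈ NNclassM d N M, ∃ g ∈ G, ∀ x : E d, ‖x‖ ≤ 1 → |f x - g x| ≤ ε := by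
  classical
  refine ⟨50 * ((d:ℝ)+2)^2, by positivity, ?_⟩
  intro N M ε hN hM hε
  have hlogb : 0 ≤ Real.log (1 + M/ε) := by
    apply Real.log_nonneg
    have : 0 < M/ε := div_pos hM hε
    linarith
  have hRHS : 0 ≤ 50 * ((d:ℝ)+2)^2 * N * Real.log (1 + M/ε) := by
    apply mul_nonneg (by positivity) hlogb
  rcases le_or_gt (2*M) ε with hcase | hcase
  · -- trivial case: the zero network suffices
    refine ⟨{fun _ => 0}, ?_, Set.finite_singleton _, ?_, ?_⟩
    · intro g hg
      rw [Set.mem_singleton_iff] at hg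
      subst hg
      refine ⟨(fun _ => 0, fun _ => 0), ?_, ?_⟩
      · unfold pathNorm; simp; linarith
      · intro x _; unfold networkFn; simp
    · have hc1 : Nat.card ({fun _ => 0} : Set (E d → ℝ)) = 1 := by
        rw [Nat.card_coe_set_eq, Set.ncard_singleton]
      rw [hc1]
      simp only [Nat.cast_one, Real.log_one]
      exact hRHS
    · intro f hf
      obtain ⟨θ, hθM, hθ⟩ := hf
      refine ⟨fun _ => 0, Set.mem_singleton _, ?_⟩
      intro x hx
      rw [hθ x hx]
      simp only [sub_zero]
      calc |networkFn θ x| ≤ 2 * pathNorm θ := networkFn_abs_le θ x hx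
        _ ≤ 2 * M := by linarith
        _ ≤ ε := hcase
  · -- main case
    have hNr : (0:ℝ) < N := by exact_mod_cast hN
    obtain ⟨t, htdef⟩ : ∃ t : ℝ, t = M / ε := ⟨_, rfl⟩
    have ht : (1:ℝ)/2 < t := by rw [htdef, lt_div_iff₀ hε]; linarith
    have ht0 : 0 < t := by linarith
    obtain ⟨b, hbdef⟩ : ∃ b : ℝ, b = 1 + t := ⟨_, rfl⟩
    have hbM : b = 1 + M/ε := by rw [hbdef, htdef]
    have hb32 : (3/2:ℝ) ≤ b := by rw [hbdef]; linarith
    have hb1 : (1:ℝ) ≤ b := by linarith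
    have hb0 : (0:ℝ) < b := by linarith
    have hlogb' : 0 ≤ Real.log b := by rw [hbM]; exact hlogb
    obtain ⟨δc, hδcdef⟩ : ∃ x : ℝ, x = ε / (4 * N) := ⟨_, rfl⟩
    have hδc0 : 0 < δc := by rw [hδcdef]; positivity
    obtain ⟨δu, hδudef⟩ : ∃ x : ℝ, x = ε / (4 * ((d:ℝ)+1) * M) := ⟨_, rfl⟩
    have hδu0 : 0 < δu := by rw [hδudef]; positivity
    obtain ⟨Kc, hKcdef⟩ : ∃ k : ℕ, k = ⌊M / δc⌋₊ := ⟨_, rfl⟩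
    obtain ⟨Ku, hKudef⟩ : ∃ k : ℕ, k = ⌈1 / δu⌉₊ := ⟨_, rfl⟩
    have hMδc : M / δc = 4*N*t := by
      rw [hδcdef, htdef]
      field_simp
    have h1δu : 1/δu = 4*((d:ℝ)+1)*t := by
      rw [hδudef, htdef]
      field_simp
    have hKcle : (Kc:ℝ) ≤ 4*N*t := by
      rw [hKcdef, ← hMδc]
      exact Nat.floor_le (by rw [hMδc]; positivity)
    have hKule : (Ku:ℝ) ≤ 4*((d:ℝ)+1)*t + 1 := by
      have h2 : ((⌈1/δu⌉₊:ℕ):ℝ) < 1/δu + 1 := Nat.ceil_lt_add_one (by positivity)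
      rw [hKudef]
      linarith [h1δu]
    obtain ⟨Ic, hIcdef⟩ : ∃ s : Finset (Fin N → ℤ),
        s = (Fintype.piFinset fun _ : Fin N => Finset.Icc (-(Kc:ℤ)) (Kc:ℤ)).filter
          (fun z => ∑ i, |z i| ≤ (Kc:ℤ)) := ⟨_, rfl⟩
    obtain ⟨Iu, hIudef⟩ : ∃ s : Finset (Fin N → Fin (d+1) → ℤ),
        s = (Fintype.piFinset fun _ : Fin N =>
            Fintype.piFinset fun _ : Fin (d+1) => Finset.Icc (-(Ku:ℤ)) (Ku:ℤ)).filter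
          (fun y => ∀ i, ‖vecOf (d+1) δu (y i)‖ ≤ 1) := ⟨_, rfl⟩
    obtain ⟨θOf, hθOf1, hθOf2⟩ : ∃ F : ((Fin N → ℤ) × (Fin N → Fin (d+1) → ℤ)) → Params d N,
        (∀ p i, (F p).1 i = δc * ((p.1 i : ℤ):ℝ)) ∧
        (∀ p i, (F p).2 i = vecOf (d+1) δu (p.2 i)) :=
      ⟨fun p => (fun i => δc * ((p.1 i : ℤ):ℝ), fun i => vecOf (d+1) δu (p.2 i)),
        fun p i => rfl, fun p i => rfl⟩
    have hnetOf : ∀ p x, networkFn (θOf p) x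
        = ∑ i, (δc * ((p.1 i : ℤ):ℝ)) * relu (aff x (vecOf (d+1) δu (p.2 i))) := by
      intro p x
      unfold networkFn
      apply Finset.sum_congr rfl
      intro i _
      rw [hθOf1, hθOf2]
    obtain ⟨GF, hGFdef⟩ : ∃ s : Finset (E d → ℝ),
        s = (Ic ×ˢ Iu).image (fun p => networkFn (θOf p)) := ⟨_, rfl⟩
    -- path norm bound for members of the grid
    have hpn : ∀ p ∈ Ic ×ˢ Iu, pathNorm (θOf p) ≤ M := by
      intro p hp
      rw [Finset.mem_product] at hp
      obtain ⟨hp1, hp2⟩ := hp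
      rw [hIcdef, Finset.mem_filter] at hp1
      rw [hIudef, Finset.mem_filter] at hp2
      have hsum : ∑ i, |p.1 i| ≤ (Kc:ℤ) := hp1.2
      have hnorm : ∀ i, ‖vecOf (d+1) δu (p.2 i)‖ ≤ 1 := hp2.2
      have hKcM : (Kc:ℝ) ≤ M / δc := by rw [hKcdef]; exact Nat.floor_le (by positivity)
      unfold pathNorm
      calc ∑ i, |(θOf p).1 i| * ‖(θOf p).2 i‖
          ≤ ∑ i, δc * |((p.1 i : ℤ):ℝ)| := by
            apply Finset.sum_le_sum
            intro i _
            rw [hθOf1, hθOf2, abs_mul, abs_of_pos hδc0]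
            calc δc * |((p.1 i : ℤ):ℝ)| * ‖vecOf (d+1) δu (p.2 i)‖
                ≤ δc * |((p.1 i : ℤ):ℝ)| * 1 :=
                  mul_le_mul_of_nonneg_left (hnorm i) (by positivity)
              _ = δc * |((p.1 i : ℤ):ℝ)| := mul_one _
        _ = δc * ∑ i, |((p.1 i : ℤ):ℝ)| := by rw [Finset.mul_sum]
        _ ≤ δc * (Kc:ℝ) := by
            apply mul_le_mul_of_nonneg_left _ hδc0.le
            have hcast : ((∑ i, |p.1 i| : ℤ):ℝ) ≤ ((Kc:ℤ):ℝ) := by exact_mod_cast hsum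
            push_cast at hcast
            exact hcast
        _ ≤ δc * (M / δc) := mul_le_mul_of_nonneg_left hKcM hδc0.le
        _ = M := by field_simp
    refine ⟨↑GF, ?_, GF.finite_toSet, ?_, ?_⟩
    · -- G ⊆ NNclassM
      intro g hg
      rw [Finset.mem_coe, hGFdef, Finset.mem_image] at hg
      obtain ⟨p, hp, rfl⟩ := hg
      exact ⟨θOf p, hpn p hp, fun x _ => rfl⟩
    · -- log cardinality bound
      have hGle : Nat.card (↑GF : Set (E d → ℝ)) ≤ Ic.card * Iu.card := by
        rw [Nat.card_coe_set_eq, Set.ncard_coe_finset, hGFdef]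
        calc ((Ic ×ˢ Iu).image (fun p => networkFn (θOf p))).card
            ≤ (Ic ×ˢ Iu).card := Finset.card_image_le
          _ = Ic.card * Iu.card := Finset.card_product _ _
      have hchoose : ((N+Kc).choose Kc : ℝ) ≤ (Real.exp 1 * (1 + (Kc:ℝ)/N))^N :=
        choose_real_le N Kc hN
      have hIcN : Ic.card ≤ 2^N * (N+Kc).choose Kc := by
        rw [hIcdef]; exact card_intvec_le N Kc
      have hfrac : (Kc:ℝ)/N ≤ 4*t := by rw [div_le_iff₀ hNr]; linarith [hKcle]
      have hbase : 2 * (Real.exp 1 * (1 + (Kc:ℝ)/N)) ≤ b^10 :=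
        aux_base_bound t b ((Kc:ℝ)/N) ht0 hb32 hbdef (by positivity) hfrac
      have hIcle : (Ic.card : ℝ) ≤ b ^ (10*N) := by
        calc (Ic.card:ℝ) ≤ ((2^N * (N+Kc).choose Kc : ℕ):ℝ) := by exact_mod_cast hIcN
          _ = 2^N * ((N+Kc).choose Kc:ℝ) := by push_cast; ring
          _ ≤ 2^N * (Real.exp 1 * (1 + (Kc:ℝ)/N))^N := by
              apply mul_le_mul_of_nonneg_left hchoose (by positivity)
          _ = (2 * (Real.exp 1 * (1+(Kc:ℝ)/N)))^N := by rw [← mul_pow]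
          _ ≤ (b^10)^N := pow_le_pow_left₀ (by positivity) hbase N
          _ = b^(10*N) := by rw [← pow_mul]
      have hIuN : Iu.card ≤ (2*Ku+1)^((d+1)*N) := by
        rw [hIudef]
        refine le_trans (Finset.card_filter_le _ _) ?_
        rw [Fintype.card_piFinset]
        have hinner : ∀ i : Fin N,
            (Fintype.piFinset fun _ : Fin (d+1) => Finset.Icc (-(Ku:ℤ)) (Ku:ℤ)).card
              = (2*Ku+1)^(d+1) := by
          intro i
          rw [Fintype.card_piFinset]
          have hIcc : (Finset.Icc (-(Ku:ℤ)) (Ku:ℤ)).card = 2*Ku+1 := by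
            rw [Int.card_Icc]
            omega
          simp [hIcc]
        rw [Finset.prod_congr rfl (fun i _ => hinner i)]
        rw [Finset.prod_const, Finset.card_univ, Fintype.card_fin, ← pow_mul]
      have hKu2 : ((2*Ku+1 : ℕ):ℝ) ≤ b^(17*(d+2)) :=
        aux_ku_bound d Ku t b ht0 hb32 hbdef hKule
      have hIule : (Iu.card:ℝ) ≤ b^(17*(d+2)*((d+1)*N)) := by
        calc (Iu.card:ℝ) ≤ (((2*Ku+1)^((d+1)*N) : ℕ):ℝ) := by exact_mod_cast hIuN
          _ = ((2*Ku+1:ℕ):ℝ)^((d+1)*N) := by push_cast; ring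
          _ ≤ (b^(17*(d+2)))^((d+1)*N) := pow_le_pow_left₀ (by positivity) hKu2 _
          _ = b^(17*(d+2)*((d+1)*N)) := by rw [← pow_mul]
      have hcard : ((Nat.card (↑GF : Set (E d → ℝ)) : ℕ):ℝ)
          ≤ b^(10*N + 17*(d+2)*((d+1)*N)) := by
        calc ((Nat.card (↑GF : Set (E d → ℝ)) : ℕ):ℝ) ≤ ((Ic.card * Iu.card : ℕ):ℝ) := by
              exact_mod_cast hGle
          _ = (Ic.card:ℝ)*(Iu.card:ℝ) := by push_cast; ring
          _ ≤ b^(10*N) * b^(17*(d+2)*((d+1)*N)) := by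
              apply mul_le_mul hIcle hIule (by positivity) (by positivity)
          _ = b^(10*N + 17*(d+2)*((d+1)*N)) := by rw [← pow_add]
      rw [← hbM]
      rcases Nat.eq_zero_or_pos (Nat.card (↑GF : Set (E d → ℝ))) with h0 | h0
      · rw [h0]
        simp only [Nat.cast_zero, Real.log_zero]
        rw [hbM]
        exact hRHS
      · have hlog : Real.log (Nat.card (↑GF : Set (E d → ℝ)))
            ≤ Real.log (b^(10*N + 17*(d+2)*((d+1)*N))) := by
          apply Real.log_le_log (by exact_mod_cast h0) hcard
        rw [Real.log_pow] at hlog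
        refine le_trans hlog ?_
        have hmle : ((10*N + 17*(d+2)*((d+1)*N) : ℕ):ℝ) ≤ 50*((d:ℝ)+2)^2*N := by
          have hnat := aux_exponent d N
          calc ((10*N + 17*(d+2)*((d+1)*N) : ℕ):ℝ) ≤ ((50*(d+2)^2*N : ℕ):ℝ) := by
                exact_mod_cast hnat
            _ = 50*((d:ℝ)+2)^2*N := by push_cast; ring
        calc ((10*N + 17*(d+2)*((d+1)*N) : ℕ):ℝ) * Real.log b
            ≤ (50*((d:ℝ)+2)^2*N) * Real.log b := by
              apply mul_le_mul_of_nonneg_right hmle hlogb'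
          _ = 50*((d:ℝ)+2)^2*(N:ℝ)*Real.log b := by ring
    · -- covering property
      intro f hf
      obtain ⟨θ, hθM, hθ⟩ := hf
      obtain ⟨c, u, hu, hcsum, heq⟩ := normalize_network θ
      have hcM : ∑ i, |c i| ≤ M := by rw [hcsum]; exact hθM
      obtain ⟨z, hzi⟩ : ∃ z : Fin N → ℤ, ∀ i, z i = itz (c i / δc) := ⟨_, fun _ => rfl⟩
      obtain ⟨y, hyi⟩ : ∃ y : Fin N → Fin (d+1) → ℤ, ∀ i j, y i j = itz (u i j / δu) :=
        ⟨_, fun _ _ => rfl⟩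
      have hzabs : ∀ i, |((z i):ℝ)| ≤ |c i| / δc := by
        intro i
        rw [hzi i]
        have h := abs_itz_le (c i / δc)
        rwa [abs_div, abs_of_pos hδc0] at h
      have hzsum : ∑ i, |z i| ≤ (Kc:ℤ) := by
        have hr : ((∑ i, |z i| : ℤ):ℝ) ≤ M / δc := by
          push_cast
          calc ∑ i, |((z i):ℝ)| ≤ ∑ i, |c i| / δc :=
                Finset.sum_le_sum (fun i _ => hzabs i)
            _ = (∑ i, |c i|) / δc := by rw [Finset.sum_div]
            _ ≤ M / δc := by gcongr
        have hfl : (∑ i, |z i| : ℤ) ≤ ⌊M/δc⌋ := Int.le_floor.mpr hr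
        refine le_trans hfl ?_
        rw [hKcdef, Int.natCast_floor_eq_floor (by positivity)]
      have hzmem : z ∈ Ic := by
        rw [hIcdef, Finset.mem_filter, Fintype.mem_piFinset]
        refine ⟨fun i => ?_, hzsum⟩
        rw [Finset.mem_Icc, ← abs_le]
        calc |z i| ≤ ∑ j, |z j| :=
              Finset.single_le_sum (fun j _ => abs_nonneg (z j)) (Finset.mem_univ i)
          _ ≤ (Kc:ℤ) := hzsum
      have hucoord : ∀ i j, |u i j| ≤ 1 := fun i j =>
        le_trans (coord_abs_le_norm' (u i) j) (hu i)
      have hyabs : ∀ i j, |((y i j):ℝ)| ≤ |u i j| / δu := by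
        intro i j
        rw [hyi i j]
        have h := abs_itz_le (u i j / δu)
        rwa [abs_div, abs_of_pos hδu0] at h
      have hyvec : ∀ i j, |vecOf (d+1) δu (y i) j| ≤ |u i j| := by
        intro i j
        rw [vecOf_apply, abs_mul, abs_of_pos hδu0]
        calc δu * |((y i j):ℝ)| ≤ δu * (|u i j|/δu) :=
              mul_le_mul_of_nonneg_left (hyabs i j) hδu0.le
          _ = |u i j| := by field_simp
      have hymem : y ∈ Iu := by
        rw [hIudef, Finset.mem_filter, Fintype.mem_piFinset]
        constructor
        · intro i
          rw [Fintype.mem_piFinset]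
          intro j
          rw [Finset.mem_Icc, ← abs_le]
          have hr : ((|y i j| : ℤ):ℝ) ≤ ((Ku:ℤ):ℝ) := by
            push_cast
            calc |((y i j):ℝ)| ≤ |u i j|/δu := hyabs i j
              _ ≤ 1/δu := by gcongr; exact hucoord i j
              _ ≤ (Ku:ℝ) := by rw [hKudef]; exact Nat.le_ceil _
          exact_mod_cast hr
        · intro i
          exact le_trans (norm_le_of_coord' (vecOf (d+1) δu (y i)) (u i) (hyvec i)) (hu i)
      have hgmem : networkFn (θOf (z,y)) ∈ GF := by
        rw [hGFdef]
        apply Finset.mem_image_of_mem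
        rw [Finset.mem_product]
        exact ⟨hzmem, hymem⟩
      refine ⟨networkFn (θOf (z,y)), hgmem, ?_⟩
      intro x hx
      rw [hθ x hx, heq x]
      have hterm : ∀ i, |c i * relu (aff x (u i))
          - (δc * ((z i):ℝ)) * relu (aff x (vecOf (d+1) δu (y i)))|
          ≤ 2*δc + |c i| * (2*((d:ℝ)+1)*δu) := by
        intro i
        apply term_bound
        · rw [hzi i]
          exact abs_sub_mul_itz_le δc (c i) hδc0
        · rw [abs_mul, abs_of_pos hδc0]
          calc δc * |((z i):ℝ)| ≤ δc * (|c i|/δc) :=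
                mul_le_mul_of_nonneg_left (hzabs i) hδc0.le
            _ = |c i| := by field_simp
        · refine le_trans (abs_relu_le' _) (le_trans (abs_aff_le' x hx _) ?_)
          nlinarith [hu i]
        · refine le_trans (relu_abs_sub' _ _) ?_
          rw [← aff_sub']
          refine le_trans (abs_aff_le' x hx _) ?_
          have hn : ‖u i - vecOf (d+1) δu (y i)‖ ≤ ((d:ℝ)+1) * δu := by
            have hcoordb : ∀ j, |(u i - vecOf (d+1) δu (y i)) j| ≤ δu := by
              intro j
              have hsub : (u i - vecOf (d+1) δu (y i)) j = u i j - δu * ((y i j):ℝ) := by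
                simp [vecOf_apply]
              rw [hsub, hyi i j]
              exact abs_sub_mul_itz_le δu (u i j) hδu0
            have hnn := norm_le_of_coord_le' (u i - vecOf (d+1) δu (y i)) δu hδu0.le hcoordb
            calc ‖u i - vecOf (d+1) δu (y i)‖ ≤ ((d+1:ℕ):ℝ) * δu := hnn
              _ = ((d:ℝ)+1) * δu := by push_cast; ring
          nlinarith [hn]
        · exact hδc0.le
        · positivity
      rw [hnetOf (z,y) x, ← Finset.sum_sub_distrib]
      refine le_trans (Finset.abs_sum_le_sum_abs _ _) ?_
      refine le_trans (Finset.sum_le_sum (fun i _ => hterm i)) ?_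
      rw [Finset.sum_add_distrib]
      have hA : ∑ _i : Fin N, 2*δc = ε/2 := by
        rw [Finset.sum_const, Finset.card_univ, Fintype.card_fin, nsmul_eq_mul, hδcdef]
        field_simp
        ring
      have hB : ∑ i, |c i| * (2*((d:ℝ)+1)*δu) ≤ ε/2 := by
        rw [← Finset.sum_mul]
        calc (∑ i, |c i|) * (2*((d:ℝ)+1)*δu) ≤ M * (2*((d:ℝ)+1)*δu) := by
              apply mul_le_mul_of_nonneg_right hcM (by positivity)
          _ = ε/2 := by
              rw [hδudef]
              field_simp
              ring
      linarith [hA, hB]
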